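/- Let d ≥ 0 be an even integer and m ≥ d+2, with distinct nodes x₁,…,x_m and positive weights w₁,…,w_m that are symmetric about 0 (there is a bijection σ of {1,…,m} with x_{σ(l)} = −x_l and w_{σ(l)} = w_l for every l). Then the WLPR masks of degree d and of degree d+1 coincide: W X_d (X_dᵀ W X_d)⁻¹ e₁^{(d+1)} = W X_{d+1} (X_{d+1}ᵀ W X_{d+1})⁻¹ e₁^{(d+2)}, where X_k is the m×(k+1) matrix with entries x_l^t (t = 0,…,k) and e₁^{(k)} is the first standard basis vector of ℝ^k. In particular, S_{d,w^λ} = S_{d+1,w^λ} for even d. -/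

import Mathlib

open Matrix

/-- The Vandermonde-type design matrix `X_k` with entries `(X_k)_{l,t} = x_l ^ t`,
`t = 0,…,k`. -/
noncomputable def designX (m k : ℕ) (x : Fin m → ℝ) : Matrix (Fin m) (Fin (k + 1)) ℝ :=
  Matrix.of fun l t => x l ^ (t : ℕ)

/-- The WLPR mask of degree `k`: `W X_k (X_kᵀ W X_k)⁻¹ e₁`. -/
noncomputable def wlprMask (m k : ℕ) (x : Fin m → ℝ) (w : Fin m → ℝ) : Fin m → ℝ :=
  (Matrix.diagonal w * designX m k x *
    ((designX m k x)ᵀ * Matrix.diagonal w * designX m k x)⁻¹) *ᵥ Pi.single 0 1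

lemma designX_mulVec_eq_zero {m k : ℕ} (x : Fin m → ℝ) (hk : k + 1 ≤ m)
    (hx : Function.Injective x) {v : Fin (k+1) → ℝ}
    (hv : designX m k x *ᵥ v = 0) : v = 0 := by
  by_contra h
  have hdet : (Matrix.vandermonde (fun i : Fin (k+1) => x (Fin.castLE hk i))).det = 0 := by
    rw [← Matrix.exists_mulVec_eq_zero_iff]
    refine ⟨v, h, ?_⟩
    funext i
    have := congrFun hv (Fin.castLE hk i)
    simpa [Matrix.mulVec, Matrix.vandermonde, designX, dotProduct] using this
  exact absurd hdet (Matrix.det_vandermonde_ne_zero_iff.mpr (hx.comp (Fin.castLE_injective hk)))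

lemma gram_isUnit {m k : ℕ} (x w : Fin m → ℝ) (hk : k + 1 ≤ m)
    (hx : Function.Injective x) (hw : ∀ l, 0 < w l) :
    IsUnit ((designX m k x)ᵀ * Matrix.diagonal w * designX m k x).det := by
  rw [isUnit_iff_ne_zero]
  intro hdet
  obtain ⟨v, hv0, hAv⟩ := (Matrix.exists_mulVec_eq_zero_iff).mpr hdet
  set y := designX m k x *ᵥ v with hy
  have h0 : v ⬝ᵥ (((designX m k x)ᵀ * Matrix.diagonal w * designX m k x) *ᵥ v) = 0 := by
    rw [hAv]; simp
  have hform : v ⬝ᵥ (((designX m k x)ᵀ * Matrix.diagonal w * designX m k x) *ᵥ v)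
      = ∑ l, w l * y l ^ 2 := by
    rw [← Matrix.mulVec_mulVec, ← Matrix.mulVec_mulVec, Matrix.dotProduct_mulVec,
      Matrix.vecMul_transpose]
    simp only [dotProduct, Matrix.mulVec_diagonal, ← hy]
    exact Finset.sum_congr rfl fun l _ => by ring
  rw [hform] at h0
  have hyl : ∀ l ∈ Finset.univ, w l * y l ^ 2 = 0 := by
    rw [← Finset.sum_eq_zero_iff_of_nonneg]
    · exact h0
    · intro l _
      exact mul_nonneg (hw l).le (sq_nonneg _)
  have : y = 0 := by
    funext l
    have h1 := hyl l (Finset.mem_univ l)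
    show y l = 0
    rcases mul_eq_zero.mp h1 with h | h
    · exact absurd h (hw l).ne'
    · exact pow_eq_zero_iff two_ne_zero |>.mp h
  exact hv0 (designX_mulVec_eq_zero x hk hx this)

lemma gram_apply {m k : ℕ} (x w : Fin m → ℝ) (s t : Fin (k+1)) :
    ((designX m k x)ᵀ * Matrix.diagonal w * designX m k x) s t
      = ∑ l, w l * x l ^ ((s : ℕ) + (t : ℕ)) := by
  simp only [Matrix.mul_apply, Matrix.transpose_apply, Matrix.diagonal_apply, designX,
    Matrix.of_apply, mul_ite, mul_zero, Finset.sum_ite_eq, Finset.sum_ite_eq', Finset.mem_univ, if_true]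
  exact Finset.sum_congr rfl fun l _ => by rw [pow_add]; ring

lemma mu_odd {m : ℕ} (x w : Fin m → ℝ) (σ : Equiv.Perm (Fin m))
    (hxσ : ∀ l, x (σ l) = -x l) (hwσ : ∀ l, w (σ l) = w l)
    {j : ℕ} (hj : Odd j) : ∑ l, w l * x l ^ j = 0 := by
  have h := Equiv.sum_comp σ (fun l => w l * x l ^ j)
  simp only [hxσ, hwσ, hj.neg_pow, mul_neg] at h
  rw [Finset.sum_neg_distrib] at h
  linarith

lemma negpow_eq {s t : ℕ} (h : Even (s + t)) : ((-1 : ℝ)) ^ t = (-1) ^ s := by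
  rcases Nat.even_or_odd s with hs | hs
  · have ht : Even t := (Nat.even_add.mp h).mp hs
    rw [hs.neg_one_pow, ht.neg_one_pow]
  · have ht : Odd t := by
      rw [Nat.not_even_iff_odd.symm]
      intro ht
      exact (Nat.not_even_iff_odd.symm.mp hs) ((Nat.even_add.mp h).mpr ht)
    rw [hs.neg_one_pow, ht.neg_one_pow]

/-- for even `d`, `m ≥ d+2`, distinct nodes and positive weights
symmetric about `0` (a bijection `σ` with `x_{σ(l)} = −x_l`, `w_{σ(l)} = w_l`),
the WLPR masks of degree `d` and of degree `d+1` coincide. -/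
theorem stmt8 (d m : ℕ) (hd : Even d) (hm : d + 2 ≤ m)
    (x : Fin m → ℝ) (hx : Function.Injective x)
    (w : Fin m → ℝ) (hw : ∀ l, 0 < w l)
    (σ : Equiv.Perm (Fin m))
    (hxσ : ∀ l, x (σ l) = -x l) (hwσ : ∀ l, w (σ l) = w l) :
    wlprMask m d x w = wlprMask m (d + 1) x w := by
  unfold wlprMask
  have hm1 : d + 1 ≤ m := by omega
  set X0 := designX m d x with hX0
  set X1 := designX m (d + 1) x with hX1
  set A0 := X0ᵀ * Matrix.diagonal w * X0 with hA0
  set A1 := X1ᵀ * Matrix.diagonal w * X1 with hA1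
  have hU0 : IsUnit A0.det := gram_isUnit x w hm1 hx hw
  have hU1 : IsUnit A1.det := gram_isUnit x w hm hx hw
  set e0 : Fin (d + 1) → ℝ := Pi.single 0 1 with he0
  set u := A0⁻¹ *ᵥ e0 with hu
  have hAu : A0 *ᵥ u = e0 := by
    rw [hu, Matrix.mulVec_mulVec, Matrix.mul_nonsing_inv _ hU0, Matrix.one_mulVec]
  have hAus : ∀ s : Fin (d + 1), ∑ t, A0 s t * u t = e0 s := fun s => congrFun hAu s
  have huniq : ∀ z : Fin (d + 1) → ℝ, A0 *ᵥ z = e0 → z = u := by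
    intro z hz
    have h2 := congrArg (fun y => A0⁻¹ *ᵥ y) hz
    simpa [Matrix.mulVec_mulVec, Matrix.nonsing_inv_mul _ hU0, Matrix.one_mulVec, hu] using h2
  -- u vanishes at odd indices
  have huodd : ∀ t : Fin (d + 1), Odd (t : ℕ) → u t = 0 := by
    have hz : A0 *ᵥ (fun t => (-1 : ℝ) ^ (t : ℕ) * u t) = e0 := by
      funext s
      show ∑ t, A0 s t * ((-1 : ℝ) ^ (t : ℕ) * u t) = e0 s
      have hterm : ∀ t : Fin (d + 1),
          A0 s t * ((-1 : ℝ) ^ (t : ℕ) * u t) = (-1 : ℝ) ^ (s : ℕ) * (A0 s t * u t) := by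
        intro t
        rcases Nat.even_or_odd ((s : ℕ) + (t : ℕ)) with hp | hp
        · rw [negpow_eq hp]; ring
        · have h0 : A0 s t = 0 := by
            rw [hA0, hX0, gram_apply]; exact mu_odd x w σ hxσ hwσ hp
          rw [h0]; ring
      rw [Finset.sum_congr rfl fun t _ => hterm t, ← Finset.mul_sum, hAus s]
      rcases eq_or_ne s 0 with rfl | hs
      · simp [he0]
      · simp [he0, Pi.single_eq_of_ne hs]
    intro t ht
    have h3 := congrFun (huniq _ hz) t
    simp only [ht.neg_one_pow] at h3
    linarith
  -- extended vector
  set v : Fin (d + 2) → ℝ := Fin.snoc u 0 with hv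
  have hA1e : ∀ (s : Fin (d + 2)) (t : Fin (d + 1)),
      A1 s t.castSucc = ∑ l, w l * x l ^ ((s : ℕ) + (t : ℕ)) := by
    intro s t
    rw [hA1, hX1, gram_apply, Fin.coe_castSucc]
  have hAv : A1 *ᵥ v = (Pi.single 0 1 : Fin (d + 2) → ℝ) := by
    funext s
    simp only [Matrix.mulVec, dotProduct]
    rw [Fin.sum_univ_castSucc]
    simp only [hv, Fin.snoc_castSucc, Fin.snoc_last, mul_zero, add_zero]
    refine Fin.lastCases ?_ ?_ s
    · have hterm : ∀ t : Fin (d + 1), A1 (Fin.last (d + 1)) t.castSucc * u t = 0 := by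
        intro t
        rcases Nat.even_or_odd (t : ℕ) with hp | hp
        · have h0 : A1 (Fin.last (d + 1)) t.castSucc = 0 := by
            rw [hA1e]
            refine mu_odd x w σ hxσ hwσ ?_
            have : ((Fin.last (d + 1) : Fin (d + 2)) : ℕ) = d + 1 := rfl
            rw [this]
            have h4 : Even (d + (t : ℕ)) := hd.add hp
            have h5 : d + 1 + (t : ℕ) = d + (t : ℕ) + 1 := by omega
            rw [h5]
            exact Even.add_one h4
          rw [h0, zero_mul]
        · rw [huodd t hp, mul_zero]
      rw [Finset.sum_eq_zero fun t _ => hterm t]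
      have : (Fin.last (d + 1) : Fin (d + 2)) ≠ 0 := by
        simp [Fin.ext_iff]
      rw [Pi.single_eq_of_ne this]
    · intro s'
      have hterm : ∀ t : Fin (d + 1),
          A1 s'.castSucc t.castSucc * u t = A0 s' t * u t := by
        intro t
        rw [hA1e, hA0, hX0, gram_apply, Fin.coe_castSucc]
      rw [Finset.sum_congr rfl fun t _ => hterm t, hAus s']
      rcases eq_or_ne s' 0 with rfl | hs
      · simp [he0]
      · have h6 : s'.castSucc ≠ 0 := by
          exact Fin.castSucc_ne_zero_iff.mpr hs
        rw [Pi.single_eq_of_ne h6, he0, Pi.single_eq_of_ne hs]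
  have hv1 : A1⁻¹ *ᵥ (Pi.single 0 1 : Fin (d + 2) → ℝ) = v := by
    rw [← hAv, Matrix.mulVec_mulVec, Matrix.nonsing_inv_mul _ hU1, Matrix.one_mulVec]
  have hXuv : X0 *ᵥ u = X1 *ᵥ v := by
    funext l
    simp only [Matrix.mulVec, dotProduct]
    conv_rhs => rw [Fin.sum_univ_castSucc]
    simp only [hv, Fin.snoc_castSucc, Fin.snoc_last, mul_zero, add_zero]
    refine Finset.sum_congr rfl fun t _ => ?_
    rw [hX0, hX1]
    simp [designX]
  rw [← Matrix.mulVec_mulVec, ← Matrix.mulVec_mulVec, ← Matrix.mulVec_mulVec,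
    ← Matrix.mulVec_mulVec, hv1, ← hu, hXuv]
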